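/- Let Σ and Σ' be finite complete generalized fans in a finite dimensional real vector space V. Suppose there exists an injection u : max Σ → max Σ' between the sets of maximal elements (with respect to inclusion) such that σ ⊆ u(σ) for every σ ∈ max Σ. Then Σ = Σ' and u is the identity map. -/

import Mathlib

open Set

noncomputable section

/-! ## Polyhedral cones and generalized fans -/

/-- A *polyhedral cone* in a real vector space: a subset of the form
`Σ_{j=1}^k ℝ_{≥0} v_j` for finitely many vectors `v_1, …, v_k`. -/
def IsPolyhedralCone {V : Type*} [AddCommGroup V] [Module ℝ V] (C : Set V) : Prop :=
  ∃ (k : ℕ) (v : Fin k → V),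
    C = {x | ∃ c : Fin k → ℝ, (∀ j, 0 ≤ c j) ∧ x = ∑ j, c j • v j}

/-- `F` is a *face* of the cone `C`: a nonempty convex subset of `C`, stable under
multiplication by nonnegative scalars, such that whenever `v, w ∈ C` and `v + w ∈ F`
one has `v, w ∈ F`. -/
def IsFaceOf {V : Type*} [AddCommGroup V] [Module ℝ V] (F C : Set V) : Prop :=
  F ⊆ C ∧ F.Nonempty ∧ Convex ℝ F ∧
    (∀ r : ℝ, 0 ≤ r → ∀ x ∈ F, r • x ∈ F) ∧
    ∀ v ∈ C, ∀ w ∈ C, v + w ∈ F → v ∈ F ∧ w ∈ F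

/-- A *generalized fan*: a set of polyhedral cones containing all faces of its members,
in which the intersection of any two members is a face of each of them. -/
def IsGeneralizedFan {V : Type*} [AddCommGroup V] [Module ℝ V] (𝒮 : Set (Set V)) : Prop :=
  (∀ σ ∈ 𝒮, IsPolyhedralCone σ) ∧
    (∀ σ ∈ 𝒮, ∀ τ : Set V, IsFaceOf τ σ → τ ∈ 𝒮) ∧
    ∀ σ₁ ∈ 𝒮, ∀ σ₂ ∈ 𝒮, IsFaceOf (σ₁ ∩ σ₂) σ₁ ∧ IsFaceOf (σ₁ ∩ σ₂) σ₂

/-- The maximal members of a family of sets with respect to inclusion. -/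
def maxMembers {α : Type*} (𝒮 : Set (Set α)) : Set (Set α) :=
  {σ ∈ 𝒮 | ∀ τ ∈ 𝒮, σ ⊆ τ → σ = τ}

/-- The dimension of a subset of a real vector space: the dimension of its linear span. -/
def setDim {V : Type*} [AddCommGroup V] [Module ℝ V] (F : Set V) : ℕ :=
  Module.finrank ℝ ↥(Submodule.span ℝ F)

/-! ## Auxiliary lemmas: algebraic properties of polyhedral cones -/

section BasicCone
variable {V : Type*} [AddCommGroup V] [Module ℝ V]

lemma IsPolyhedralCone.convex {C : Set V} (h : IsPolyhedralCone C) : Convex ℝ C := by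
  obtain ⟨k, v, rfl⟩ := h
  rintro x ⟨c, hc, rfl⟩ y ⟨d, hd, rfl⟩ a b ha hb hab
  refine ⟨fun j => a * c j + b * d j,
    fun j => add_nonneg (mul_nonneg ha (hc j)) (mul_nonneg hb (hd j)), ?_⟩
  rw [Finset.smul_sum, Finset.smul_sum, ← Finset.sum_add_distrib]
  exact Finset.sum_congr rfl fun j _ => by rw [add_smul, mul_smul, mul_smul]

lemma IsPolyhedralCone.zero_mem {C : Set V} (h : IsPolyhedralCone C) : (0 : V) ∈ C := by
  obtain ⟨k, v, rfl⟩ := h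
  exact ⟨fun _ => 0, fun _ => le_refl _, by simp⟩

lemma IsPolyhedralCone.smul_mem {C : Set V} (h : IsPolyhedralCone C) :
    ∀ r : ℝ, 0 ≤ r → ∀ x ∈ C, r • x ∈ C := by
  obtain ⟨k, v, rfl⟩ := h
  rintro r hr x ⟨c, hc, rfl⟩
  refine ⟨fun j => r * c j, fun j => mul_nonneg hr (hc j), ?_⟩
  rw [Finset.smul_sum]
  exact Finset.sum_congr rfl fun j _ => by rw [mul_smul]

/-- A face absorbs the whole cone as soon as it contains a point `x` of `C` from which every
direction of `C` can be slightly extended inside `C`. -/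
lemma subset_face {C F : Set V} (hsmul : ∀ r : ℝ, 0 ≤ r → ∀ w ∈ C, r • w ∈ C)
    (hF : IsFaceOf F C) {x : V} (hxF : x ∈ F)
    (hext : ∀ y ∈ C, ∃ s : ℝ, 0 < s ∧ x + s • (x - y) ∈ C) : C ⊆ F := by
  intro y hy
  obtain ⟨s, hs, hz⟩ := hext y hy
  have h1 : s • y ∈ C := hsmul s hs.le y hy
  have h2 : (1 + s) • x ∈ F := hF.2.2.2.1 (1 + s) (by linarith) x hxF
  have h3 : (x + s • (x - y)) + s • y = (1 + s) • x := by module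
  have h4 := (hF.2.2.2.2 _ hz _ h1 (by rw [h3]; exact h2)).2
  have h5 := hF.2.2.2.1 s⁻¹ (by positivity) _ h4
  rwa [inv_smul_smul₀ hs.ne'] at h5

/-- Every member of a finite family of sets is contained in a maximal member. -/
lemma exists_max_mem {S : Set (Set V)} (hfin : S.Finite) {σ : Set V} (hσ : σ ∈ S) :
    ∃ τ ∈ maxMembers S, σ ⊆ τ := by
  obtain ⟨τ, hτ, hmax⟩ := Set.Finite.exists_maximalFor id {ρ ∈ S | σ ⊆ ρ}
    (hfin.subset (sep_subset _ _)) ⟨σ, hσ, subset_rfl⟩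
  exact ⟨τ, ⟨hτ.1, fun ρ hρ hsub => subset_antisymm hsub (hmax ⟨hρ, hτ.2.trans hsub⟩ hsub)⟩, hτ.2⟩

end BasicCone

/-! ## Closedness of polyhedral cones -/

section Closed
variable {V : Type*} [NormedAddCommGroup V] [NormedSpace ℝ V] [FiniteDimensional ℝ V]

omit [FiniteDimensional ℝ V] in
lemma sum_ext_eq {k : ℕ} (v : Fin k → V) (t : Finset (Fin k)) (c : Fin k → ℝ)
    (hc : ∀ j ∉ t, c j = 0) : ∑ j : t, c j • v j = ∑ j, c j • v j := by
  rw [Finset.sum_coe_sort t (fun j => c j • v j)]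
  exact Finset.sum_subset t.subset_univ (fun j _ hj => by rw [hc j hj, zero_smul])

/-- The conical hull of a linearly independent finite family is closed. -/
lemma isClosed_finset_cone {k : ℕ} (v : Fin k → V) (t : Finset (Fin k))
    (ht : LinearIndependent ℝ (fun j : t => v j)) :
    IsClosed {x : V | ∃ c : t → ℝ, (∀ j, 0 ≤ c j) ∧ x = ∑ j, c j • v (j : Fin k)} := by
  classical
  set L : (t → ℝ) →ₗ[ℝ] V := Fintype.linearCombination ℝ (fun j : t => v j) with hL
  have hLapp : ∀ c : t → ℝ, L c = ∑ j, c j • v (j : Fin k) := fun c => rfl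
  have hker : LinearMap.ker L = ⊥ := by
    rw [LinearMap.ker_eq_bot']
    intro c hc
    have h := Fintype.linearIndependent_iff.mp ht c (by rw [← hLapp]; exact hc)
    funext j; exact h j
  have hce := LinearMap.isClosedEmbedding_of_injective hker
  have himg : {x : V | ∃ c : t → ℝ, (∀ j, 0 ≤ c j) ∧ x = ∑ j, c j • v (j : Fin k)}
      = L '' {c : t → ℝ | ∀ j, 0 ≤ c j} := by
    ext x
    constructor
    · rintro ⟨c, hc, rfl⟩; exact ⟨c, hc, by rw [hLapp]⟩
    · rintro ⟨c, hc, rfl⟩; exact ⟨c, hc, by rw [hLapp]⟩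
  rw [himg]
  refine hce.isClosedMap _ ?_
  have : {c : t → ℝ | ∀ j, 0 ≤ c j} = ⋂ j : t, {c : t → ℝ | 0 ≤ c j} := by
    ext c; simp [mem_iInter]
  rw [this]
  exact isClosed_iInter fun j => isClosed_le continuous_const (continuous_apply j)

/-- Carathéodory's lemma for conical hulls: every conical combination is a conical
combination of a linearly independent subfamily. -/
lemma caratheodory_cone {k : ℕ} (v : Fin k → V) (x : V)
    (hx : ∃ c : Fin k → ℝ, (∀ j, 0 ≤ c j) ∧ x = ∑ j, c j • v j) :
    ∃ t : Finset (Fin k), LinearIndependent ℝ (fun j : t => v j) ∧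
      ∃ c : t → ℝ, (∀ j, 0 ≤ c j) ∧ x = ∑ j, c j • v (j : Fin k) := by
  classical
  set A : Set (Finset (Fin k)) :=
    {t | ∃ c : Fin k → ℝ, (∀ j, 0 ≤ c j) ∧ (∀ j ∉ t, c j = 0) ∧ x = ∑ j, c j • v j} with hA
  obtain ⟨c₀, hc₀, hx₀⟩ := hx
  have hAne : A.Nonempty :=
    ⟨Finset.univ, c₀, hc₀, fun j hj => absurd (Finset.mem_univ j) hj, hx₀⟩
  obtain ⟨t, htA, htmin⟩ := Set.exists_min_image A Finset.card (Set.toFinite A) hAne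
  obtain ⟨c, hcnn, hcsupp, hcx⟩ := htA
  have hindep : LinearIndependent ℝ (fun j : t => v j) := by
    by_contra hdep
    obtain ⟨g, hgsum, i₀, hgi₀⟩ := Fintype.not_linearIndependent_iff.mp hdep
    have key : ∀ d : Fin k → ℝ, (∀ j ∉ t, d j = 0) → (∑ j, d j • v j = 0) →
        (∃ j ∈ t, 0 < d j) → False := by
      rintro d hdsupp hdsum ⟨j₁, hj₁t, hj₁pos⟩
      set Q : Finset (Fin k) := t.filter (fun j => 0 < d j) with hQ
      have hj₁Q : j₁ ∈ Q := Finset.mem_filter.mpr ⟨hj₁t, hj₁pos⟩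
      obtain ⟨j₀, hj₀Q, hj₀min⟩ :=
        Q.exists_min_image (fun j => c j / d j) ⟨j₁, hj₁Q⟩
      have hdj₀ : 0 < d j₀ := (Finset.mem_filter.mp hj₀Q).2
      have hj₀t : j₀ ∈ t := (Finset.mem_filter.mp hj₀Q).1
      set r : ℝ := c j₀ / d j₀ with hr
      have hr0 : 0 ≤ r := div_nonneg (hcnn j₀) hdj₀.le
      set c' : Fin k → ℝ := fun j => c j - r * d j with hc'
      have hc'nn : ∀ j, 0 ≤ c' j := by
        intro j
        by_cases hj : j ∈ Q
        · have hdj : 0 < d j := (Finset.mem_filter.mp hj).2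
          have := hj₀min j hj
          have : r * d j ≤ c j := by
            rw [← le_div_iff₀ hdj]; exact this
          simpa [hc'] using sub_nonneg.mpr this
        · have hdj : d j ≤ 0 := by
            by_cases hjt : j ∈ t
            · by_contra hpos
              exact hj (Finset.mem_filter.mpr ⟨hjt, lt_of_not_ge hpos⟩)
            · rw [hdsupp j hjt]
          have : r * d j ≤ 0 := mul_nonpos_of_nonneg_of_nonpos hr0 hdj
          have := hcnn j
          simp only [hc']; linarith
      have hc'j₀ : c' j₀ = 0 := by
        simp only [hc', hr]
        field_simp
        ring
      have hc'supp : ∀ j ∉ t.erase j₀, c' j = 0 := by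
        intro j hj
        by_cases hjj : j = j₀
        · rw [hjj]; exact hc'j₀
        · have hjt : j ∉ t := fun hjt => hj (Finset.mem_erase.mpr ⟨hjj, hjt⟩)
          simp only [hc', hcsupp j hjt, hdsupp j hjt, mul_zero, sub_zero]
      have hc'x : x = ∑ j, c' j • v j := by
        have : ∑ j, c' j • v j = (∑ j, c j • v j) - r • ∑ j, d j • v j := by
          rw [Finset.smul_sum, ← Finset.sum_sub_distrib]
          exact Finset.sum_congr rfl fun j _ => by rw [sub_smul, mul_smul]
        rw [this, hdsum, smul_zero, sub_zero, hcx]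
      have hmem : t.erase j₀ ∈ A := ⟨c', hc'nn, hc'supp, hc'x⟩
      have := htmin _ hmem
      have hlt := Finset.card_erase_lt_of_mem hj₀t
      omega
    set d : Fin k → ℝ := fun j => if h : j ∈ t then g ⟨j, h⟩ else 0 with hd
    have hdsupp : ∀ j ∉ t, d j = 0 := fun j hj => by simp [hd, dif_neg hj]
    have hdsum : ∑ j, d j • v j = 0 := by
      have h1 : ∑ j : t, d (j : Fin k) • v (j : Fin k) = ∑ j, d j • v j :=
        sum_ext_eq v t d hdsupp
      rw [← h1]
      have h2 : ∀ j : t, d (j : Fin k) = g j := fun j => by simp [hd, dif_pos j.2]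
      rw [← hgsum]
      exact Finset.sum_congr rfl fun j _ => by rw [h2]
    have hdsum' : ∑ j, (-d) j • v j = 0 := by
      simp only [Pi.neg_apply, neg_smul, Finset.sum_neg_distrib, hdsum, neg_zero]
    rcases lt_trichotomy (g i₀) 0 with hneg | hzero | hpos
    · refine key (-d) (fun j hj => by simp [hdsupp j hj]) hdsum' ⟨i₀, i₀.2, ?_⟩
      simp only [Pi.neg_apply, hd, dif_pos i₀.2]
      simpa using hneg
    · exact hgi₀ hzero
    · exact key d hdsupp hdsum ⟨i₀, i₀.2, by simp only [hd, dif_pos i₀.2]; simpa using hpos⟩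
  refine ⟨t, hindep, fun j => c (j : Fin k), fun j => hcnn _, ?_⟩
  rw [sum_ext_eq v t c hcsupp, hcx]

/-- Polyhedral cones are closed. -/
lemma IsPolyhedralCone.isClosed {C : Set V} (h : IsPolyhedralCone C) : IsClosed C := by
  classical
  obtain ⟨k, v, rfl⟩ := h
  have hun : {x : V | ∃ c : Fin k → ℝ, (∀ j, 0 ≤ c j) ∧ x = ∑ j, c j • v j}
      = ⋃ t : {t : Finset (Fin k) // LinearIndependent ℝ (fun j : t => v j)},
          {x : V | ∃ c : t.1 → ℝ, (∀ j, 0 ≤ c j) ∧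
            x = ∑ j, c j • v (j : Fin k)} := by
    ext x
    simp only [mem_iUnion, mem_setOf_eq]
    constructor
    · intro hx
      obtain ⟨t, ht, c, hc, hxc⟩ := caratheodory_cone v x hx
      exact ⟨⟨t, ht⟩, c, hc, hxc⟩
    · rintro ⟨⟨t, ht⟩, c, hc, rfl⟩
      refine ⟨fun j => if hj : j ∈ t then c ⟨j, hj⟩ else 0,
        fun j => by dsimp only; split <;> [exact hc _; exact le_refl 0], ?_⟩
      rw [← sum_ext_eq v t _ (fun j hj => dif_neg hj)]
      exact Finset.sum_congr rfl fun j _ => by rw [dif_pos j.2]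
  rw [hun]
  exact isClosed_iUnion_of_finite fun t => isClosed_finset_cone v t t.2

end Closed

/-! ## Topological auxiliary lemmas -/

section Topo
variable {V : Type*} [NormedAddCommGroup V] [NormedSpace ℝ V]

lemma interior_union_empty {a b : Set V} (ha : IsClosed a) (hia : interior a = ∅)
    (hib : interior b = ∅) : interior (a ∪ b) = ∅ := by
  have h1 : interior (a ∪ b) \ a ⊆ interior b := by
    rw [(isOpen_interior.sdiff ha).subset_interior_iff]
    rintro x ⟨hx, hxa⟩
    rcases interior_subset hx with h | h
    · exact absurd h hxa
    · exact h
  have h2 : interior (a ∪ b) ⊆ a := by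
    intro x hx
    by_contra hxa
    have := h1 ⟨hx, hxa⟩
    rw [hib] at this
    exact this
  have h3 := isOpen_interior.subset_interior_iff.mpr h2
  rw [hia] at h3
  exact subset_empty_iff.mp h3

/-- A finite union of closed sets with empty interior has empty interior. -/
lemma interior_sUnion_empty {T : Set (Set V)} (hfin : T.Finite) :
    (∀ t ∈ T, IsClosed t) → (∀ t ∈ T, interior t = ∅) → interior (⋃₀ T) = ∅ :=
  Set.Finite.induction_on T hfin (by simp)
    (fun {a s} _ _ ih hcl hint => by
      rw [sUnion_insert]
      exact interior_union_empty (hcl a (mem_insert a s))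
        (hint a (mem_insert a s))
        (ih (fun t ht => hcl t (mem_insert_of_mem a ht))
          (fun t ht => hint t (mem_insert_of_mem a ht))))

lemma closed_interior_frontier_empty {s : Set V} (hs : IsClosed s) :
    interior (frontier s) = ∅ := by
  rw [hs.frontier_eq, eq_empty_iff_forall_notMem]
  intro x hx
  exact (interior_subset hx).2 (interior_mono diff_subset hx)

/-- From a point of an open set one can move slightly in any prescribed direction. -/
lemma exists_pos_extension {U : Set V} (hU : IsOpen U) {x : V} (hx : x ∈ U) (y : V) :
    ∃ s : ℝ, 0 < s ∧ x + s • (x - y) ∈ U := by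
  have hcont : Continuous (fun s : ℝ => x + s • (x - y)) := by
    fun_prop
  have htend : Filter.Tendsto (fun s : ℝ => x + s • (x - y)) (nhds 0) (nhds x) := by
    have := hcont.tendsto 0
    simpa using this
  have hev : ∀ᶠ s in nhds (0 : ℝ), x + s • (x - y) ∈ U := htend.eventually (hU.eventually_mem hx)
  obtain ⟨ε, hε, hball⟩ := Metric.eventually_nhds_iff_ball.mp hev
  refine ⟨ε / 2, by positivity, hball _ ?_⟩
  rw [Metric.mem_ball, Real.dist_eq, sub_zero, abs_of_pos (by positivity)]
  linarith

/-- A convex set lies in the closure of its interior, given an interior point. -/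
lemma subset_closure_interior_of_convex {s : Set V} (hconv : Convex ℝ s) {x₀ : V}
    (hx₀ : x₀ ∈ interior s) : s ⊆ closure (interior s) := by
  intro y hy
  have hcont : Continuous (fun ε : ℝ => (1 - ε) • y + ε • x₀) := by fun_prop
  have htend : Filter.Tendsto (fun ε : ℝ => (1 - ε) • y + ε • x₀) (nhdsWithin 0 (Ioi 0))
      (nhds y) := by
    have h1 := (hcont.tendsto 0).mono_left (nhdsWithin_le_nhds (s := Ioi (0:ℝ)))
    simpa using h1
  have hev : ∀ᶠ ε in nhdsWithin (0:ℝ) (Ioi 0), (1 - ε) • y + ε • x₀ ∈ interior s := by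
    filter_upwards [Ioo_mem_nhdsGT_of_mem (by constructor <;> norm_num : (0:ℝ) ∈ Ico 0 1)]
      with ε hε
    exact hconv.combo_self_interior_mem_interior hy hx₀ (by linarith [hε.2]) hε.1 (by ring)
  exact mem_closure_of_tendsto htend hev

end Topo

/-! ## Geometry of complete fans -/

section Fans
variable {V : Type*} [NormedAddCommGroup V] [NormedSpace ℝ V] [FiniteDimensional ℝ V]

/-- In a finite complete generalized fan, every maximal cone has nonempty interior. -/
lemma max_interior_nonempty {S : Set (Set V)} (hS : IsGeneralizedFan S) (hfin : S.Finite)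
    (hcomp : ⋃₀ S = univ) {τ : Set V} (hτ : τ ∈ maxMembers S) :
    (interior τ).Nonempty := by
  classical
  have hτS : τ ∈ S := hτ.1
  have hpoly := hS.1 τ hτS
  set W := Submodule.span ℝ τ with hWdef
  set τ' : Set W := ((↑) : W → V) ⁻¹' τ with hτ'def
  have hτ'convex : Convex ℝ τ' := (hpoly.convex).linear_preimage W.subtype
  have hτW : τ ⊆ (W : Set V) := Submodule.subset_span
  have hspan : Submodule.span ℝ τ' = ⊤ := by
    apply Submodule.map_injective_of_injective W.injective_subtype
    rw [Submodule.map_span, Submodule.map_top, Submodule.range_subtype]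
    have himg : W.subtype '' τ' = τ := by
      show Subtype.val '' (Subtype.val ⁻¹' τ) = τ
      rw [Set.image_preimage_eq_inter_range, Subtype.range_coe]
      exact inter_eq_self_of_subset_left hτW
    rw [himg]
  have h0τ' : (0 : W) ∈ τ' := by
    show ((0 : W) : V) ∈ τ
    simpa using hpoly.zero_mem
  have haff : affineSpan ℝ τ' = ⊤ := by
    rw [AffineSubspace.affineSpan_eq_top_iff_vectorSpan_eq_top_of_nonempty ℝ ↥W ↥W
      (⟨0, h0τ'⟩ : τ'.Nonempty)]
    rw [vectorSpan_eq_span_vsub_set_right ℝ h0τ']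
    simpa [vsub_eq_sub] using hspan
  have hint' : (interior τ').Nonempty :=
    (Convex.interior_nonempty_iff_affineSpan_eq_top hτ'convex).mpr haff
  obtain ⟨xh, hxh⟩ := hint'
  set x : V := (xh : V) with hxdef
  have hxτ : x ∈ τ := Set.mem_preimage.mp (interior_subset hxh)
  have hext : ∀ y ∈ τ, ∃ s : ℝ, 0 < s ∧ x + s • (x - y) ∈ τ := by
    intro y hy
    obtain ⟨s, hs, hmem⟩ := exists_pos_extension isOpen_interior hxh (⟨y, hτW hy⟩ : W)
    refine ⟨s, hs, ?_⟩
    have h := interior_subset hmem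
    have : ((xh + s • (xh - ⟨y, hτW hy⟩) : W) : V) = x + s • (x - y) := by
      push_cast
      rfl
    rwa [← this]
  have hfull : ∃ σ ∈ S, x ∈ σ ∧ (interior σ).Nonempty := by
    by_contra hcon
    push_neg at hcon
    have hAclosed : IsClosed (⋃₀ {σ | σ ∈ S ∧ x ∉ σ}) := by
      rw [sUnion_eq_biUnion]
      exact (hfin.subset (fun σ hσ => hσ.1)).isClosed_biUnion
        (fun σ hσ => (hS.1 σ hσ.1).isClosed)
    have hxA : x ∉ ⋃₀ {σ | σ ∈ S ∧ x ∉ σ} := by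
      rintro ⟨σ, ⟨hσ, hxσ⟩, hmem⟩
      exact hxσ hmem
    have hint0 : interior (⋃₀ {σ | σ ∈ S ∧ x ∈ σ}) = ∅ := by
      apply interior_sUnion_empty (hfin.subset (fun σ hσ => hσ.1))
      · exact fun σ hσ => (hS.1 σ hσ.1).isClosed
      · intro σ hσ
        exact hcon σ hσ.1 hσ.2
    have hsub : (⋃₀ {σ | σ ∈ S ∧ x ∉ σ})ᶜ ⊆ ⋃₀ {σ | σ ∈ S ∧ x ∈ σ} := by
      intro z hz
      have : z ∈ ⋃₀ S := by rw [hcomp]; trivial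
      obtain ⟨σ, hσ, hzσ⟩ := this
      by_cases hxσ : x ∈ σ
      · exact ⟨σ, ⟨hσ, hxσ⟩, hzσ⟩
      · exact absurd ⟨σ, ⟨hσ, hxσ⟩, hzσ⟩ hz
    have := hAclosed.isOpen_compl.subset_interior_iff.mpr hsub
    rw [hint0] at this
    exact this hxA
  obtain ⟨σ₁, hσ₁S, hxσ₁, hintσ₁⟩ := hfull
  have hface : IsFaceOf (τ ∩ σ₁) τ := (hS.2.2 τ hτS σ₁ hσ₁S).1
  have hsubset : τ ⊆ τ ∩ σ₁ :=
    subset_face (hpoly.smul_mem) hface ⟨hxτ, hxσ₁⟩ hext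
  have heq : τ = σ₁ := hτ.2 σ₁ hσ₁S (hsubset.trans inter_subset_right)
  rw [heq]
  exact hintσ₁

/-- Two maximal cones such that the interior of the first meets the second coincide. -/
lemma max_eq_of_interior_inter {S : Set (Set V)} (hS : IsGeneralizedFan S) {σ₁ σ₂ : Set V}
    (h₁ : σ₁ ∈ maxMembers S) (h₂ : σ₂ ∈ maxMembers S) {z : V}
    (hz₁ : z ∈ interior σ₁) (hz₂ : z ∈ σ₂) : σ₁ = σ₂ := by
  have hface := (hS.2.2 σ₁ h₁.1 σ₂ h₂.1).1
  have hsub : σ₁ ⊆ σ₁ ∩ σ₂ :=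
    subset_face ((hS.1 σ₁ h₁.1).smul_mem) hface ⟨interior_subset hz₁, hz₂⟩
      (fun y hy => (exists_pos_extension isOpen_interior hz₁ y).imp
        fun s hs => ⟨hs.1, interior_subset hs.2⟩)
  exact h₁.2 σ₂ h₂.1 (hsub.trans inter_subset_right)

/-- Density of interiors of maximal cones: every nonempty open set meets the interior of some
maximal cone. -/
lemma exists_mem_interior_max {S : Set (Set V)} (hS : IsGeneralizedFan S) (hfin : S.Finite)
    (hcomp : ⋃₀ S = univ) {U : Set V} (hU : IsOpen U) (hUne : U.Nonempty) :
    ∃ τ ∈ maxMembers S, ∃ z ∈ U, z ∈ interior τ := by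
  have hN : interior (⋃₀ (frontier '' S)) = ∅ :=
    interior_sUnion_empty (hfin.image _)
      (by rintro _ ⟨σ, hσ, rfl⟩; exact isClosed_frontier)
      (by rintro _ ⟨σ, hσ, rfl⟩; exact closed_interior_frontier_empty ((hS.1 σ hσ).isClosed))
  have hnsub : ¬ U ⊆ ⋃₀ (frontier '' S) := by
    intro h
    have := hU.subset_interior_iff.mpr h
    rw [hN] at this
    exact hUne.ne_empty (subset_empty_iff.mp this)
  obtain ⟨z, hzU, hzN⟩ := not_subset.mp hnsub
  have : z ∈ ⋃₀ S := by rw [hcomp]; trivial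
  obtain ⟨σ, hσ, hzσ⟩ := this
  have hzi : z ∈ interior σ := by
    by_contra hzi
    exact hzN ⟨frontier σ, ⟨σ, hσ, rfl⟩, ⟨subset_closure hzσ, hzi⟩⟩
  obtain ⟨τ, hτ, hστ⟩ := exists_max_mem hfin hσ
  exact ⟨τ, hτ, z, hzU, interior_mono hστ hzi⟩

/-- The main theorem, for a normed finite dimensional space. -/
theorem fan_master (S S' : Set (Set V)) (hS : IsGeneralizedFan S) (hS' : IsGeneralizedFan S')
    (hfin : S.Finite) (hfin' : S'.Finite)
    (hcomp : ⋃₀ S = Set.univ) (hcomp' : ⋃₀ S' = Set.univ)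
    (u : maxMembers S → maxMembers S')
    (hu : Function.Injective u)
    (husub : ∀ σ : maxMembers S, (σ : Set V) ⊆ ((u σ : Set V))) :
    S = S' ∧ ∀ σ : maxMembers S, ((u σ : Set V)) = (σ : Set V) := by
  -- Step 1 : u is the identity on maximal members
  have hid : ∀ σ₀ : maxMembers S, ((u σ₀ : Set V)) = (σ₀ : Set V) := by
    intro σ₀
    refine subset_antisymm ?_ (husub σ₀)
    have hclσ₀ : IsClosed (σ₀ : Set V) := (hS.1 _ σ₀.2.1).isClosed
    by_cases hsub : interior ((u σ₀ : Set V)) ⊆ (σ₀ : Set V)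
    · intro y hy
      have h1 : y ∈ closure (interior ((u σ₀ : Set V))) := by
        obtain ⟨x₀, hx₀⟩ := max_interior_nonempty hS' hfin' hcomp' (u σ₀).2
        exact subset_closure_interior_of_convex ((hS'.1 _ (u σ₀).2.1).convex) hx₀ hy
      have h2 : y ∈ closure (σ₀ : Set V) := closure_mono hsub h1
      rwa [hclσ₀.closure_eq] at h2
    · exfalso
      obtain ⟨y, hy₁, hy₂⟩ := not_subset.mp hsub
      have hUopen : IsOpen (interior ((u σ₀ : Set V)) ∩ (σ₀ : Set V)ᶜ) :=
        isOpen_interior.inter hclσ₀.isOpen_compl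
      obtain ⟨τ, hτ, z, hzU, hzi⟩ :=
        exists_mem_interior_max hS hfin hcomp hUopen ⟨y, hy₁, hy₂⟩
      set τh : maxMembers S := ⟨τ, hτ⟩
      have hzuτ : z ∈ ((u τh : Set V)) := husub τh (interior_subset hzi)
      have heq' : ((u σ₀ : Set V)) = ((u τh : Set V)) :=
        max_eq_of_interior_inter hS' (u σ₀).2 (u τh).2 hzU.1 hzuτ
      have : u σ₀ = u τh := Subtype.ext heq'
      have hστ : σ₀ = τh := hu this
      have : z ∈ (σ₀ : Set V) := by
        rw [hστ]
        exact interior_subset hzi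
      exact hzU.2 this
  -- Step 2 : the sets of maximal members coincide
  have hmax : maxMembers S = maxMembers S' := by
    apply subset_antisymm
    · intro σ hσ
      have := (u ⟨σ, hσ⟩).2
      rwa [hid ⟨σ, hσ⟩] at this
    · intro τ hτ
      obtain ⟨x₀, hx₀⟩ := max_interior_nonempty hS' hfin' hcomp' hτ
      obtain ⟨σ, hσ, z, hzU, hzi⟩ :=
        exists_mem_interior_max hS hfin hcomp isOpen_interior ⟨x₀, hx₀⟩
      have hσ' : σ ∈ maxMembers S' := by
        have := (u ⟨σ, hσ⟩).2
        rwa [hid ⟨σ, hσ⟩] at this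
      have : τ = σ := max_eq_of_interior_inter hS' hτ hσ' hzU (interior_subset hzi)
      rw [this]
      exact hσ
  -- Step 3 : S = S'
  refine ⟨subset_antisymm ?_ ?_, hid⟩
  · intro σ hσ
    obtain ⟨τ, hτ, hστ⟩ := exists_max_mem hfin hσ
    have hτS' : τ ∈ S' := by
      have h : τ ∈ maxMembers S' := hmax ▸ hτ
      exact h.1
    have hface : IsFaceOf σ τ := by
      have := (hS.2.2 σ hσ τ hτ.1).2
      rwa [inter_eq_self_of_subset_left hστ] at this
    exact hS'.2.1 τ hτS' σ hface
  · intro σ hσ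
    obtain ⟨τ, hτ, hστ⟩ := exists_max_mem hfin' hσ
    have hτS : τ ∈ S := by
      have h : τ ∈ maxMembers S := hmax ▸ hτ
      exact h.1
    have hface : IsFaceOf σ τ := by
      have := (hS'.2.2 σ hσ τ hτ.1).2
      rwa [inter_eq_self_of_subset_left hστ] at this
    exact hS.2.1 τ hτS σ hface

end Fans

/-- **Lemma (fan rigidity).** Let `S` and `S'` be finite complete generalized fans in a
finite dimensional real vector space `V`. Suppose there exists an injection
`u : max S → max S'` between the sets of maximal elements (with respect to inclusion)
such that `σ ⊆ u σ` for every `σ ∈ max S`. Then `S = S'` and `u` is the identity. -/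
theorem fan_eq_of_max_injection {V : Type*} [AddCommGroup V] [Module ℝ V]
    [FiniteDimensional ℝ V]
    (S S' : Set (Set V)) (hS : IsGeneralizedFan S) (hS' : IsGeneralizedFan S')
    (hfin : S.Finite) (hfin' : S'.Finite)
    (hcomp : ⋃₀ S = Set.univ) (hcomp' : ⋃₀ S' = Set.univ)
    (u : maxMembers S → maxMembers S')
    (hu : Function.Injective u)
    (husub : ∀ σ : maxMembers S, (σ : Set V) ⊆ ((u σ : Set V))) :
    S = S' ∧ ∀ σ : maxMembers S, ((u σ : Set V)) = (σ : Set V) := by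
  let e : V ≃ₗ[ℝ] (Fin (Module.finrank ℝ V) → ℝ) := (Module.finBasis ℝ V).equivFun
  letI : NormedAddCommGroup V :=
    NormedAddCommGroup.induced V (Fin (Module.finrank ℝ V) → ℝ)
      (e : V →ₗ[ℝ] (Fin (Module.finrank ℝ V) → ℝ)) e.injective
  letI : NormedSpace ℝ V :=
    NormedSpace.induced ℝ V (Fin (Module.finrank ℝ V) → ℝ)
      (e : V →ₗ[ℝ] (Fin (Module.finrank ℝ V) → ℝ))
  exact fan_master S S' hS hS' hfin hfin' hcomp hcomp' u hu husub
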